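/- The linearized binomial L_r(x) = x^{q^r} + a x over F_{q^n} is a permutation polynomial of F_{q^n} if and only if (-1)^{n/d} · a^{(q^n-1)/(q^d-1)} ≠ 1, where d = gcd(n, r). -/

import Mathlib

open Finset

private lemma aux_dvd_iff (g q m : ℕ) (hm : 1 ≤ q ^ m) :
    g ∣ q ^ m - 1 ↔ (q : ZMod g) ^ m = 1 := by
  rw [← Nat.cast_pow, show (1 : ZMod g) = ((1 : ℕ) : ZMod g) by simp,
    ZMod.natCast_eq_natCast_iff, Nat.ModEq.comm, Nat.modEq_iff_dvd' hm]

private lemma aux_gcd (q r n : ℕ) (hq : 2 ≤ q) :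
    Nat.gcd (q ^ r - 1) (q ^ n - 1) = q ^ Nat.gcd r n - 1 := by
  have hpos : ∀ m : ℕ, 1 ≤ q ^ m := fun m => Nat.one_le_pow _ _ (by omega)
  apply Nat.dvd_antisymm
  · set g := Nat.gcd (q ^ r - 1) (q ^ n - 1) with hg
    have h1 : (q : ZMod g) ^ r = 1 := (aux_dvd_iff g q r (hpos r)).mp (Nat.gcd_dvd_left _ _)
    have h2 : (q : ZMod g) ^ n = 1 := (aux_dvd_iff g q n (hpos n)).mp (Nat.gcd_dvd_right _ _)
    have hd : orderOf (q : ZMod g) ∣ Nat.gcd r n :=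
      Nat.dvd_gcd (orderOf_dvd_of_pow_eq_one h1) (orderOf_dvd_of_pow_eq_one h2)
    exact (aux_dvd_iff g q _ (hpos _)).mpr (orderOf_dvd_iff_pow_eq_one.mp hd)
  · apply Nat.dvd_gcd
    · have h : (q ^ Nat.gcd r n) ^ (r / Nat.gcd r n) = q ^ r := by
        rw [← pow_mul, Nat.mul_div_cancel' (Nat.gcd_dvd_left r n)]
      simpa [h] using Nat.sub_dvd_pow_sub_pow (q ^ Nat.gcd r n) 1 (r / Nat.gcd r n)
    · have h : (q ^ Nat.gcd r n) ^ (n / Nat.gcd r n) = q ^ n := by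
        rw [← pow_mul, Nat.mul_div_cancel' (Nat.gcd_dvd_right r n)]
      simpa [h] using Nat.sub_dvd_pow_sub_pow (q ^ Nat.gcd r n) 1 (n / Nat.gcd r n)

private lemma aux_cyclic {G : Type*} [Group G] [Fintype G] [IsCyclic G] (m : ℕ) (u : G) :
    (∃ y : G, y ^ m = u) ↔ u ^ (Fintype.card G / Nat.gcd m (Fintype.card G)) = 1 := by
  set N := Fintype.card G with hN
  have hN0 : 0 < N := Fintype.card_pos
  set c := Nat.gcd m N with hc
  have hc0 : 0 < c := Nat.gcd_pos_of_pos_right m hN0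
  constructor
  · rintro ⟨y, rfl⟩
    rw [← pow_mul]
    have h : m * (N / c) = N * (m / c) := by
      rw [← Nat.mul_div_assoc m (Nat.gcd_dvd_right m N),
        ← Nat.mul_div_assoc N (Nat.gcd_dvd_left m N), mul_comm m N]
    rw [h, pow_mul, pow_card_eq_one, one_pow]
  · intro h
    obtain ⟨g, hg⟩ := IsCyclic.exists_generator (α := G)
    obtain ⟨j, rfl⟩ := (Submonoid.mem_powers_iff u g).mp (mem_powers_iff_mem_zpowers.mpr (hg u))
    rw [← pow_mul] at h
    have hord : orderOf g = N := by
      rw [orderOf_eq_card_of_forall_mem_zpowers hg, Nat.card_eq_fintype_card]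
    have hdvd : N ∣ j * (N / c) := by
      have h' : orderOf g ∣ j * (N / c) := orderOf_dvd_of_pow_eq_one h
      rwa [hord] at h'
    have hNc : c * (N / c) = N := Nat.mul_div_cancel' (Nat.gcd_dvd_right m N)
    have hcj : c ∣ j := by
      have hq0 : 0 < N / c := Nat.div_pos (Nat.le_of_dvd hN0 (Nat.gcd_dvd_right m N)) hc0
      have h2 : c * (N / c) ∣ j * (N / c) := by rw [hNc]; exact hdvd
      exact (Nat.mul_dvd_mul_iff_right hq0).mp h2
    obtain ⟨j', rfl⟩ := hcj
    have hbez : (c : ℤ) = m * Nat.gcdA m N + N * Nat.gcdB m N := Nat.gcd_eq_gcd_ab m N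
    refine ⟨g ^ (Nat.gcdA m N * j'), ?_⟩
    have h1 : (g ^ (Nat.gcdA m N * j')) ^ m = g ^ (Nat.gcdA m N * j' * m) := by
      rw [← zpow_natCast (g ^ (Nat.gcdA m N * j')), ← zpow_mul]
    rw [h1, show g ^ (c * j') = g ^ ((c * j' : ℕ) : ℤ) from (zpow_natCast g _).symm,
      zpow_eq_zpow_iff_modEq, hord]
    have key : ((c * j' : ℕ) : ℤ) - Nat.gcdA m N * j' * m = N * (Nat.gcdB m N * j') := by
      push_cast
      linear_combination (j' : ℤ) * hbez
    exact Int.modEq_iff_dvd.mpr ⟨_, key⟩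

private lemma aux_geom (Q M : ℕ) (hQ : 2 ≤ Q) :
    (Q ^ M - 1) / (Q - 1) = ∑ i ∈ Finset.range M, Q ^ i := by
  have h1 : 1 ≤ Q ^ M := Nat.one_le_pow _ _ (by omega)
  apply Nat.div_eq_of_eq_mul_left (show 0 < Q - 1 by omega)
  have h2 : ((Q ^ M - 1 : ℕ) : ℤ) = (((∑ i ∈ Finset.range M, Q ^ i) * (Q - 1) : ℕ) : ℤ) := by
    rw [Nat.cast_sub h1, Nat.cast_mul, Nat.cast_sub (by omega : 1 ≤ Q)]
    push_cast
    rw [geom_sum_mul]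
  exact Nat.cast_injective h2

private lemma aux_parity (Q M : ℕ) (hodd : Q % 2 = 1) :
    (∑ i ∈ Finset.range M, Q ^ i) % 2 = M % 2 := by
  have h : ((∑ i ∈ Finset.range M, Q ^ i : ℕ) : ZMod 2) = ((M : ℕ) : ZMod 2) := by
    push_cast
    have hQ : (Q : ZMod 2) = 1 := by
      rw [show (Q : ZMod 2) = ((Q % 2 : ℕ) : ZMod 2) from (ZMod.natCast_mod Q 2).symm, hodd,
        Nat.cast_one]
    simp [hQ]
  exact (ZMod.natCast_eq_natCast_iff' _ _ _).mp h

/-- The linearized binomial `L_r(x) = x^{q^r} + a x` over `F_{q^n}` is a permutation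
polynomial of `F_{q^n}` iff `(-1)^{n/d} a^{(q^n-1)/(q^d-1)} ≠ 1`, where `d = gcd(n,r)`. -/
theorem stmt_0 (q n r : ℕ) (hq : IsPrimePow q) (hr : 1 ≤ r) (hrn : r ≤ n - 1)
    (F : Type*) [Field F] [Fintype F] (hF : Fintype.card F = q ^ n) (a : F) :
    Function.Bijective (fun x : F => x ^ q ^ r + a * x) ↔
      (-1 : F) ^ (n / Nat.gcd n r) * a ^ ((q ^ n - 1) / (q ^ Nat.gcd n r - 1)) ≠ 1 := by
  classical
  obtain ⟨p, k, hpp, hk, rfl⟩ := hq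
  have hp : p.Prime := hpp.nat_prime
  haveI : Fact p.Prime := ⟨hp⟩
  have hn2 : 2 ≤ n := by omega
  set q := p ^ k with hqdef
  have hq2 : 2 ≤ q := Nat.one_lt_pow (by omega) hp.one_lt
  have qpow : ∀ m : ℕ, q ^ m = p ^ (k * m) := fun m => by rw [hqdef, ← pow_mul]
  have hcard : Fintype.card F = p ^ (k * n) := by rw [hF, qpow]
  haveI hcharF : CharP F p := by
    have h1 : CharP F (ringChar F) := ringChar.charP F
    obtain ⟨s, hs1, hs2⟩ := FiniteField.card F (ringChar F)
    have hpr : p = ringChar F := by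
      have hdvd : p ∣ ringChar F ^ (s : ℕ) := by
        rw [← hs2, hcard]
        exact dvd_pow_self p (by positivity)
      exact (Nat.prime_dvd_prime_iff_eq hp hs1).mp (hp.dvd_of_dvd_pow hdvd)
    rwa [hpr]
  set d := Nat.gcd n r with hd
  have hdr : d ∣ r := Nat.gcd_dvd_right n r
  have hdn : d ∣ n := Nat.gcd_dvd_left n r
  have hd1 : 1 ≤ d := Nat.gcd_pos_of_pos_right n hr
  have hqr1 : 1 ≤ q ^ r := Nat.one_le_pow _ _ (by omega)
  have hqr2 : 2 ≤ q ^ r := Nat.one_lt_pow (by omega) (by omega)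
  have hqd2 : 2 ≤ q ^ d := Nat.one_lt_pow (by omega) (by omega)
  have hqdn : q ^ d ≤ q ^ n := Nat.pow_le_pow_right (by omega) (Nat.le_of_dvd (by omega) hdn)
  set e := (q ^ n - 1) / (q ^ d - 1) with he
  have he1 : 1 ≤ e := (Nat.one_le_div_iff (by omega)).mpr (by omega)
  have hzero : (0 : F) ^ q ^ r + a * 0 = 0 := by
    rw [zero_pow (by positivity : q ^ r ≠ 0)]
    ring
  have step1 : Function.Bijective (fun x : F => x ^ q ^ r + a * x) ↔
      ∀ x : F, x ^ q ^ r + a * x = 0 → x = 0 := by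
    constructor
    · intro hb x hx
      exact hb.injective (a₁ := x) (a₂ := 0)
        (show x ^ q ^ r + a * x = 0 ^ q ^ r + a * 0 by rw [hzero]; exact hx)
    · intro h
      apply Finite.injective_iff_bijective.mp
      intro x y hxy
      have h0 : (x - y) ^ q ^ r + a * (x - y) = 0 := by
        rw [qpow r, sub_pow_char_pow, ← qpow r]
        simp only at hxy
        have : x ^ q ^ r + a * x = y ^ q ^ r + a * y := hxy
        ring_nf
        ring_nf at this
        linear_combination this
      exact sub_eq_zero.mp (h _ h0)
  have step2 : (∀ x : F, x ^ q ^ r + a * x = 0 → x = 0) ↔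
      ¬ ∃ x : F, x ≠ 0 ∧ x ^ (q ^ r - 1) = -a := by
    constructor
    · rintro h ⟨x, hx0, hx⟩
      apply hx0
      apply h
      have hpow : x ^ q ^ r = x ^ (q ^ r - 1) * x := by
        rw [← pow_succ, Nat.sub_add_cancel hqr1]
      rw [hpow, hx]; ring
    · intro h x hx
      by_contra hx0
      apply h
      refine ⟨x, hx0, ?_⟩
      have hxx : (x ^ (q ^ r - 1) + a) * x = 0 := by
        have hpow : x ^ (q ^ r - 1) * x = x ^ q ^ r := by
          rw [← pow_succ, Nat.sub_add_cancel hqr1]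
        calc (x ^ (q ^ r - 1) + a) * x = x ^ q ^ r + a * x := by rw [add_mul, hpow]
        _ = 0 := hx
      rcases mul_eq_zero.mp hxx with h1 | h1
      · exact eq_neg_of_add_eq_zero_left h1
      · exact absurd h1 hx0
  rw [step1, step2]
  -- sign lemma
  have hsign : (-1 : F) ^ e = (-1 : F) ^ (n / d) := by
    by_cases hp2 : p = 2
    · haveI : CharP F 2 := hp2 ▸ hcharF
      have hneg : (-1 : F) = 1 := CharTwo.neg_eq 1
      rw [hneg, one_pow, one_pow]
    · have hpodd : p % 2 = 1 := Nat.odd_iff.mp (hp.odd_of_ne_two hp2)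
      have hqodd : q % 2 = 1 := Nat.odd_iff.mp ((Nat.odd_iff.mpr hpodd).pow)
      have hQodd : q ^ d % 2 = 1 := Nat.odd_iff.mp ((Nat.odd_iff.mpr hqodd).pow)
      have hQn : (q ^ d) ^ (n / d) = q ^ n := by rw [← pow_mul, Nat.mul_div_cancel' hdn]
      have hgeom : e = ∑ i ∈ Finset.range (n / d), (q ^ d) ^ i := by
        rw [he, ← hQn, aux_geom _ _ hqd2]
      have hmod : e % 2 = (n / d) % 2 := by rw [hgeom]; exact aux_parity _ _ hQodd
      rw [neg_one_pow_eq_pow_mod_two, hmod, ← neg_one_pow_eq_pow_mod_two]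
  by_cases ha : a = 0
  · subst ha
    have hL : ¬ ∃ x : F, x ≠ 0 ∧ x ^ (q ^ r - 1) = -0 := by
      rintro ⟨x, hx0, hx⟩
      rw [neg_zero] at hx
      exact hx0 ((pow_eq_zero_iff (by omega : q ^ r - 1 ≠ 0)).mp hx)
    have hR : (-1 : F) ^ (n / d) * (0 : F) ^ e ≠ 1 := by
      rw [zero_pow (by omega : e ≠ 0), mul_zero]
      exact zero_ne_one
    exact iff_of_true hL hR
  · set c : Fˣ := Units.mk0 (-a) (neg_ne_zero.mpr ha) with hcdef
    have hcard_units : Fintype.card Fˣ = q ^ n - 1 := by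
      rw [Fintype.card_units, hF]
    have hgcd : Nat.gcd (q ^ r - 1) (q ^ n - 1) = q ^ d - 1 := by
      rw [aux_gcd q r n (by omega), Nat.gcd_comm r n]
    have hiff : (∃ x : F, x ≠ 0 ∧ x ^ (q ^ r - 1) = -a) ↔ ∃ y : Fˣ, y ^ (q ^ r - 1) = c := by
      constructor
      · rintro ⟨x, hx0, hx⟩
        exact ⟨Units.mk0 x hx0, Units.ext (by simpa [hcdef] using hx)⟩
      · rintro ⟨y, hy⟩
        exact ⟨y, y.ne_zero, by simpa [hcdef] using congrArg Units.val hy⟩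
    have hcyc := aux_cyclic (G := Fˣ) (q ^ r - 1) c
    rw [hcard_units, hgcd, ← he] at hcyc
    rw [hiff, hcyc]
    apply not_congr
    have hcF : ((c ^ e : Fˣ) : F) = (-1 : F) ^ (n / d) * a ^ e := by
      rw [Units.val_pow_eq_pow_val]
      have hc : (c : F) = -a := rfl
      rw [hc, neg_pow, hsign]
    constructor
    · intro h
      rw [← hcF, h, Units.val_one]
    · intro h
      exact Units.ext (by rw [hcF, h, Units.val_one])
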